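/- If the complete graph K_n admits a star edge-coloring with b colors, then b ≥ 2n(n−1)/(n+2). In particular, χ'_s(K_n) ≥ (2 + o(1))·n. -/

import Mathlib

open SimpleGraph

/-- A star edge-coloring: proper (adjacent distinct edges get different colors),
and no path with 4 edges nor 4-cycle uses at most two colors. -/
def IsStarEdgeColoring {V α : Type*} (G : SimpleGraph V) (c : Sym2 V → α) : Prop :=
  (∀ e₁ ∈ G.edgeSet, ∀ e₂ ∈ G.edgeSet, e₁ ≠ e₂ → (∃ v, v ∈ e₁ ∧ v ∈ e₂) → c e₁ ≠ c e₂) ∧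
  (∀ (u v : V) (p : G.Walk u v), p.IsPath → p.length = 4 →
      ¬ ∃ a b : α, ∀ e ∈ p.edges, c e = a ∨ c e = b) ∧
  (∀ (u : V) (p : G.Walk u u), p.IsCycle → p.length = 4 →
      ¬ ∃ a b : α, ∀ e ∈ p.edges, c e = a ∨ c e = b)

/-- The star chromatic index. -/
noncomputable def starChromaticIndex {V : Type*} (G : SimpleGraph V) : ℕ :=
  sInf {k | ∃ c : Sym2 V → Fin k, IsStarEdgeColoring G c}

open Finset

section Aux
variable {n b : ℕ} {c : Sym2 (Fin n) → Fin b}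

lemma csw (c : Sym2 (Fin n) → Fin b) (a x : Fin n) : c s(a,x) = c s(x,a) := by
  rw [Sym2.eq_swap]

lemma proper_helper (hc : IsStarEdgeColoring (⊤ : SimpleGraph (Fin n)) c)
    {a x y : Fin n} (hx : a ≠ x) (hy : a ≠ y)
    (hcc : c (s(a, x)) = c (s(a, y))) : x = y := by
  by_contra hne
  refine hc.1 s(a,x) (by simpa using hx) s(a,y) (by simpa using hy) ?_ ⟨a, by simp, by simp⟩ hcc
  simp only [ne_eq, Sym2.eq_iff, not_or]
  push_neg
  constructor
  · exact fun _ => hne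
  · intro h h2
    exact hne (h2.trans h)

lemma star_key (hc : IsStarEdgeColoring (⊤ : SimpleGraph (Fin n)) c)
    {u v x y z : Fin n} (huv : u ≠ v) (hux : u ≠ x) (huy : u ≠ y)
    (hvx : v ≠ x) (hvy : v ≠ y) (hxy : x ≠ y)
    (hce : c s(u,v) = c s(x,y)) (hzu : z ≠ u) :
    c s(u,z) ≠ c s(v,x) := by
  intro hj
  have hij : c s(u,v) ≠ c s(v,x) := by
    refine hc.1 s(u,v) (by simpa using huv) s(v,x) (by simpa using hvx) ?_ ⟨v, by simp, by simp⟩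
    simp only [ne_eq, Sym2.eq_iff, not_or]
    push_neg
    tauto
  have hzv : z ≠ v := by rintro rfl; exact hij hj
  have hzx : z ≠ x := by
    rintro rfl
    have h1 : c s(z,u) = c s(z,v) := by rw [← csw c u z, hj]; exact csw c v z
    exact huv (proper_helper hc hzu hzv h1)
  have hzy : z ≠ y := by
    rintro rfl
    refine hc.2.2 u
      (Walk.cons (show (⊤ : SimpleGraph (Fin n)).Adj u v by simp [huv])
        (Walk.cons (show (⊤ : SimpleGraph (Fin n)).Adj v x by simp [hvx])
          (Walk.cons (show (⊤ : SimpleGraph (Fin n)).Adj x z by simp [hzx.symm])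
            (Walk.cons (show (⊤ : SimpleGraph (Fin n)).Adj z u by simp [hzu]) Walk.nil))))
      ?_ (by simp) ⟨c s(u,v), c s(v,x), ?_⟩
    · rw [Walk.isCycle_def]
      refine ⟨?_, by simp, ?_⟩
      · rw [Walk.isTrail_def]
        simp only [Walk.edges_cons, Walk.edges_nil, List.nodup_cons, List.mem_cons,
          List.not_mem_nil, or_false, List.nodup_nil, ne_eq, Sym2.eq_iff, not_or]
        push_neg
        tauto
      · simp only [Walk.support_cons, Walk.support_nil, List.tail_cons, List.nodup_cons,
          List.mem_cons, List.not_mem_nil, or_false, List.nodup_nil]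
        push_neg
        tauto
    · intro e he
      simp only [Walk.edges_cons, Walk.edges_nil, List.mem_cons, List.not_mem_nil,
        or_false] at he
      rcases he with rfl | rfl | rfl | rfl
      · left; rfl
      · right; rfl
      · left; exact hce.symm
      · right; rw [← hj]; exact (csw c u z).symm
  refine hc.2.1 z y
    (Walk.cons (show (⊤ : SimpleGraph (Fin n)).Adj z u by simp [hzu])
      (Walk.cons (show (⊤ : SimpleGraph (Fin n)).Adj u v by simp [huv])
        (Walk.cons (show (⊤ : SimpleGraph (Fin n)).Adj v x by simp [hvx])
          (Walk.cons (show (⊤ : SimpleGraph (Fin n)).Adj x y by simp [hxy]) Walk.nil))))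
    ?_ (by simp) ⟨c s(u,v), c s(v,x), ?_⟩
  · rw [Walk.isPath_def]
    simp only [Walk.support_cons, Walk.support_nil, List.nodup_cons, List.mem_cons,
      List.not_mem_nil, or_false, List.nodup_nil]
    push_neg
    tauto
  · intro e he
    simp only [Walk.edges_cons, Walk.edges_nil, List.mem_cons, List.not_mem_nil,
      or_false] at he
    rcases he with rfl | rfl | rfl | rfl
    · right; rw [← hj]; exact (csw c u z).symm
    · left; rfl
    · right; rfl
    · left; exact hce.symm

end Aux

section Count
variable {n b : ℕ} (c : Sym2 (Fin n) → Fin b)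

/-- oriented edges of color j -/
def AOr (j : Fin b) : Finset (Fin n × Fin n) :=
  Finset.univ.filter (fun p => p.1 ≠ p.2 ∧ c s(p.1, p.2) = j)

lemma mem_AOr {j : Fin b} {p : Fin n × Fin n} :
    p ∈ AOr c j ↔ p.1 ≠ p.2 ∧ c s(p.1, p.2) = j := by
  simp [AOr]

/-- ordered 3-edge paths with equal end colors -/
def SPaths : Finset ((Fin n × Fin n) × (Fin n × Fin n)) :=
  Finset.univ.filter (fun q => q.1.1 ≠ q.1.2 ∧ q.1.1 ≠ q.2.1 ∧ q.1.1 ≠ q.2.2 ∧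
    q.1.2 ≠ q.2.1 ∧ q.1.2 ≠ q.2.2 ∧ q.2.1 ≠ q.2.2 ∧
    c s(q.1.1, q.1.2) = c s(q.2.1, q.2.2))

/-- vertices not covered by color j -/
def UncovV (j : Fin b) : Finset (Fin n) :=
  Finset.univ.filter (fun u => ∀ z, z ≠ u → c s(u, z) ≠ j)

lemma sum_AOr_card : ∑ j : Fin b, (AOr c j).card = n * n - n := by
  have h1 : (Finset.univ : Finset (Fin n)).offDiag
      = Finset.univ.filter (fun p : Fin n × Fin n => p.1 ≠ p.2) := by
    ext p; simp [Finset.mem_offDiag]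
  have h2 : ((Finset.univ : Finset (Fin n)).offDiag).card
      = ∑ j : Fin b, (AOr c j).card := by
    rw [Finset.card_eq_sum_card_fiberwise
      (f := fun p : Fin n × Fin n => c s(p.1, p.2)) (t := Finset.univ)
      (fun x _ => Finset.mem_univ _)]
    apply Finset.sum_congr rfl
    intro j _
    congr 1
    ext p
    simp only [Finset.mem_filter, Finset.mem_offDiag, Finset.mem_univ, true_and, AOr]
  rw [← h2, Finset.offDiag_card, Finset.card_univ, Fintype.card_fin]

lemma card_AOr_le (hc : IsStarEdgeColoring (⊤ : SimpleGraph (Fin n)) c) (j : Fin b) :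
    (AOr c j).card ≤ n ∧ (UncovV c j).card = n - (AOr c j).card := by
  have hinj : Set.InjOn Prod.fst (AOr c j : Set (Fin n × Fin n)) := by
    intro p hp q hq hfst
    rw [Finset.mem_coe, mem_AOr] at hp hq
    have := proper_helper hc (a := p.1) (x := p.2) (y := q.2) hp.1 (hfst ▸ hq.1)
      (by rw [hp.2]; rw [← hq.2]; rw [hfst])
    exact Prod.ext hfst this
  have hcard : ((AOr c j).image Prod.fst).card = (AOr c j).card :=
    Finset.card_image_of_injOn hinj
  have hsub : (AOr c j).image Prod.fst ⊆ Finset.univ := Finset.subset_univ _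
  have hUn : UncovV c j = Finset.univ \ (AOr c j).image Prod.fst := by
    ext u
    simp only [UncovV, Finset.mem_filter, Finset.mem_univ, true_and,
      Finset.mem_sdiff, Finset.mem_image]
    constructor
    · rintro h ⟨p, hp, rfl⟩
      rw [mem_AOr] at hp
      exact h p.2 (Ne.symm hp.1) hp.2
    · intro h z hz hcz
      exact h ⟨(u, z), by rw [mem_AOr]; exact ⟨Ne.symm hz, hcz⟩, rfl⟩
  constructor
  · rw [← hcard]; exact Finset.card_le_univ _ |>.trans (by simp)
  · rw [hUn, Finset.card_sdiff_of_subset hsub, hcard]; simp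

lemma lower_bound_count (hc : IsStarEdgeColoring (⊤ : SimpleGraph (Fin n)) c) :
    ∑ j : Fin b, (AOr c j).card * (AOr c j).card ≤ (SPaths c).card + 2 * (n * n - n) := by
  have hfib : (SPaths c).card = ∑ j : Fin b,
      ((SPaths c).filter (fun q => c s(q.1.1, q.1.2) = j)).card :=
    Finset.card_eq_sum_card_fiberwise (fun x _ => Finset.mem_univ _)
  rw [hfib, ← sum_AOr_card c, Finset.mul_sum, ← Finset.sum_add_distrib]
  apply Finset.sum_le_sum
  intro j _
  -- A×A ⊆ S_j ∪ diag ∪ swapdiag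
  set Sj := (SPaths c).filter (fun q => c s(q.1.1, q.1.2) = j) with hSj
  have hsub : (AOr c j) ×ˢ (AOr c j) ⊆
      Sj ∪ ((AOr c j).image (fun p => (p, p)) ∪ (AOr c j).image (fun p => (p, p.swap))) := by
    rintro ⟨⟨u, v⟩, ⟨x, y⟩⟩ hq
    rw [Finset.mem_product, mem_AOr, mem_AOr] at hq
    obtain ⟨⟨huv, hcuv⟩, ⟨hxy, hcxy⟩⟩ := hq
    simp only at huv hcuv hxy hcxy
    by_cases h1 : (x, y) = (u, v)
    · apply Finset.mem_union_right; apply Finset.mem_union_left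
      exact Finset.mem_image.2 ⟨(u, v), by rw [mem_AOr]; exact ⟨huv, hcuv⟩, by rw [h1]⟩
    by_cases h2 : (x, y) = (v, u)
    · apply Finset.mem_union_right; apply Finset.mem_union_right
      exact Finset.mem_image.2 ⟨(u, v), by rw [mem_AOr]; exact ⟨huv, hcuv⟩, by rw [h2]; rfl⟩
    apply Finset.mem_union_left
    have hux : u ≠ x := by
      rintro rfl
      exact h1 (by rw [proper_helper hc huv hxy (hcuv.trans hcxy.symm)])
    have huy : u ≠ y := by
      rintro rfl
      have : v = x := proper_helper hc huv (Ne.symm hxy)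
        (by rw [hcuv, ← csw c x u, hcxy])
      exact h2 (by rw [this])
    have hvx : v ≠ x := by
      rintro rfl
      have : u = y := proper_helper hc (Ne.symm huv) hxy
        (by rw [← csw c u v, hcuv, hcxy])
      exact h2 (by rw [this])
    have hvy : v ≠ y := by
      rintro rfl
      have : u = x := proper_helper hc (Ne.symm huv) (Ne.symm hxy)
        (by rw [← csw c u v, hcuv, ← csw c x v, hcxy])
      exact h1 (by rw [this])
    rw [hSj, Finset.mem_filter]
    refine ⟨?_, hcuv⟩
    simp only [SPaths, Finset.mem_filter, Finset.mem_univ, true_and]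
    exact ⟨huv, hux, huy, hvx, hvy, hxy, hcuv.trans hcxy.symm⟩
  calc (AOr c j).card * (AOr c j).card = ((AOr c j) ×ˢ (AOr c j)).card := by
        rw [Finset.card_product]
    _ ≤ _ := Finset.card_le_card hsub
    _ ≤ Sj.card + (((AOr c j).image (fun p => (p, p))).card
          + ((AOr c j).image (fun p => (p, p.swap))).card) := by
        refine (Finset.card_union_le _ _).trans ?_
        exact Nat.add_le_add_left (Finset.card_union_le _ _) _
    _ ≤ Sj.card + 2 * (AOr c j).card := by
        have := Finset.card_image_le (s := AOr c j) (f := fun p => (p, p))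
        have := Finset.card_image_le (s := AOr c j) (f := fun p => (p, p.swap))
        omega

lemma upper_bound_count (hc : IsStarEdgeColoring (⊤ : SimpleGraph (Fin n)) c) :
    (SPaths c).card ≤ ∑ j : Fin b, (AOr c j).card * (n - (AOr c j).card) := by
  classical
  -- W : middle oriented edges × uncovered endpoint
  set W : Finset ((Fin n × Fin n) × Fin n) := Finset.univ.filter
    (fun w => w.1.1 ≠ w.1.2 ∧ ∀ z, z ≠ w.2 → c s(w.2, z) ≠ c s(w.1.1, w.1.2)) with hW
  have hle : (SPaths c).card ≤ W.card := by
    apply Finset.card_le_card_of_injOn (fun q => ((q.1.2, q.2.1), q.1.1))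
    · rintro ⟨⟨u, v⟩, ⟨x, y⟩⟩ hq
      simp only [Finset.mem_coe, SPaths, Finset.mem_filter, Finset.mem_univ, true_and] at hq
      obtain ⟨huv, hux, huy, hvx, hvy, hxy, hce⟩ := hq
      rw [Finset.mem_coe, hW, Finset.mem_filter]
      exact ⟨Finset.mem_univ _, hvx, fun z hz => star_key hc huv hux huy hvx hvy hxy hce hz⟩
    · rintro ⟨⟨u, v⟩, ⟨x, y⟩⟩ hq ⟨⟨u', v'⟩, ⟨x', y'⟩⟩ hq' heq
      simp only [Finset.coe_filter, SPaths, Finset.mem_filter, Finset.mem_univ, true_and,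
        Set.mem_setOf_eq] at hq hq'
      obtain ⟨huv, hux, huy, hvx, hvy, hxy, hce⟩ := hq
      obtain ⟨huv', hux', huy', hvx', hvy', hxy', hce'⟩ := hq'
      simp only [Prod.mk.injEq] at heq
      obtain ⟨⟨hv, hx⟩, hu⟩ := heq
      subst hv; subst hx; subst hu
      have : y = y' := proper_helper hc hxy hxy' (by rw [← hce, ← hce'])
      simp [this]
  refine hle.trans ?_
  have hfib : W.card = ∑ j : Fin b,
      (W.filter (fun w => c s(w.1.1, w.1.2) = j)).card :=
    Finset.card_eq_sum_card_fiberwise (fun x _ => Finset.mem_univ _)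
  rw [hfib]
  apply Finset.sum_le_sum
  intro j _
  have heq : W.filter (fun w => c s(w.1.1, w.1.2) = j) = (AOr c j) ×ˢ (UncovV c j) := by
    ext ⟨⟨v, x⟩, u⟩
    simp only [hW, Finset.mem_filter, Finset.mem_univ, true_and, Finset.mem_product,
      mem_AOr, UncovV]
    constructor
    · rintro ⟨⟨hvx, hz⟩, hcj⟩
      refine ⟨⟨hvx, hcj⟩, ?_⟩
      intro z hzu
      rw [← hcj]
      exact hz z hzu
    · rintro ⟨⟨hvx, hcj⟩, hu⟩
      refine ⟨⟨hvx, ?_⟩, hcj⟩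
      intro z hz
      rw [hcj]
      exact hu z hz
  rw [heq, Finset.card_product, (card_AOr_le c hc j).2]

end Count


lemma part1 {n b : ℕ} (c : Sym2 (Fin n) → Fin b)
    (hc : IsStarEdgeColoring (⊤ : SimpleGraph (Fin n)) c) :
    (2 * (n : ℚ) * ((n : ℚ) - 1)) / ((n : ℚ) + 2) ≤ (b : ℚ) := by
  have hpos : (0:ℚ) < (n:ℚ) + 2 := by positivity
  have hb : (0:ℚ) ≤ (b:ℚ) := Nat.cast_nonneg b
  rw [div_le_iff₀ hpos]
  rcases lt_or_ge n 2 with hn | hn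
  · interval_cases n <;> push_cast <;> nlinarith
  · have key := lower_bound_count c hc
    have key2 := upper_bound_count c hc
    have haj : ∀ j, (AOr c j).card ≤ n := fun j => (card_AOr_le c hc j).1
    have hsum : ∑ j : Fin b, (AOr c j).card = n * n - n := sum_AOr_card c
    have hnn : n ≤ n * n := Nat.le_mul_of_pos_left n (by omega)
    set aQ : Fin b → ℚ := fun j => ((AOr c j).card : ℚ) with haQ
    set N : ℚ := (n:ℚ) * (n:ℚ) - n with hN
    have hc3 : ((n * n - n : ℕ) : ℚ) = N := by
      rw [Nat.cast_sub hnn]; push_cast; ring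
    have hsumQ : ∑ j : Fin b, aQ j = N := by
      rw [← hc3, ← hsum]; push_cast; rfl
    have hQ1 : ∑ j : Fin b, aQ j * aQ j ≤ ((SPaths c).card : ℚ) + 2 * N := by
      have h' : ((∑ j : Fin b, (AOr c j).card * (AOr c j).card : ℕ) : ℚ)
          ≤ (((SPaths c).card + 2 * (n * n - n) : ℕ) : ℚ) := Nat.cast_le.mpr key
      push_cast [hc3] at h'
      exact h'
    have hQ2 : ((SPaths c).card : ℚ) ≤ ∑ j : Fin b, aQ j * ((n:ℚ) - aQ j) := by
      calc ((SPaths c).card : ℚ)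
          ≤ ((∑ j : Fin b, (AOr c j).card * (n - (AOr c j).card) : ℕ) : ℚ) := by
            exact_mod_cast key2
        _ = ∑ j : Fin b, aQ j * ((n:ℚ) - aQ j) := by
            rw [Nat.cast_sum]
            refine Finset.sum_congr rfl fun j _ => ?_
            rw [Nat.cast_mul, Nat.cast_sub (haj j)]
    have hsplit : ∑ j : Fin b, aQ j * ((n:ℚ) - aQ j)
        = (n:ℚ) * N - ∑ j : Fin b, aQ j * aQ j := by
      rw [← hsumQ, Finset.mul_sum, ← Finset.sum_sub_distrib]
      exact Finset.sum_congr rfl fun j _ => by ring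
    set Q : ℚ := ∑ j : Fin b, aQ j * aQ j with hQ
    have h2Q : 2 * Q ≤ ((n:ℚ) + 2) * N := by
      have := hQ1.trans (by linarith [hQ2, hsplit] :
        ((SPaths c).card : ℚ) + 2 * N ≤ (n:ℚ) * N - Q + 2 * N)
      linarith
    have hCS : N ^ 2 ≤ Q * b := by
      have h := Finset.sum_mul_sq_le_sq_mul_sq Finset.univ aQ (fun _ => (1:ℚ))
      simp only [mul_one, one_pow] at h
      rw [hsumQ] at h
      calc N ^ 2 ≤ (∑ j : Fin b, aQ j ^ 2) * ∑ _j : Fin b, (1:ℚ) := h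
        _ = Q * b := by
            rw [hQ]
            congr 1
            · exact Finset.sum_congr rfl fun j _ => sq (aQ j) ▸ by ring
            · simp [Finset.card_univ]
    have hn2 : (2:ℚ) ≤ (n:ℚ) := by exact_mod_cast hn
    have hNpos : 0 < N := by rw [hN]; nlinarith
    have h1 : 2 * N ^ 2 ≤ ((n:ℚ) + 2) * N * b := by nlinarith
    have h2 : 2 * N ≤ ((n:ℚ) + 2) * b := by nlinarith
    nlinarith

lemma list_four {γ : Type*} (l : List γ) (h : l.length = 4) :
    ∃ x y z t, l = x :: y :: z :: t := by
  rcases l with _ | ⟨x, _ | ⟨y, _ | ⟨z, t⟩⟩⟩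
  · simp at h
  · simp at h
  · simp at h
  · exact ⟨x, y, z, t, rfl⟩

lemma three_distinct {β : Type*} {x y z a b' : β} (hxy : x ≠ y) (hxz : x ≠ z) (hyz : y ≠ z)
    (hx : x = a ∨ x = b') (hy : y = a ∨ y = b') (hz : z = a ∨ z = b') : False := by
  rcases hx with rfl | rfl <;> rcases hy with rfl | rfl <;> rcases hz with rfl | rfl <;>
    simp_all

lemma exists_coloring (n : ℕ) : ∃ k, ∃ c : Sym2 (Fin n) → Fin k,
    IsStarEdgeColoring (⊤ : SimpleGraph (Fin n)) c := by
  refine ⟨Fintype.card (Sym2 (Fin n)), fun e => Fintype.equivFin (Sym2 (Fin n)) e, ?_, ?_, ?_⟩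
  · intro e1 _ e2 _ hne _
    exact fun h => hne ((Fintype.equivFin _).injective h)
  · rintro u v p hp hl ⟨a, b, hab⟩
    have hnd : p.edges.Nodup := hp.isTrail.edges_nodup
    have hlen : p.edges.length = 4 := by rw [SimpleGraph.Walk.length_edges, hl]
    obtain ⟨e0, e1, e2, t, hE⟩ := list_four p.edges hlen
    rw [hE] at hnd hab
    simp only [List.nodup_cons, List.mem_cons, not_or] at hnd
    refine three_distinct (x := Fintype.equivFin (Sym2 (Fin n)) e0)
      (y := Fintype.equivFin (Sym2 (Fin n)) e1) (z := Fintype.equivFin (Sym2 (Fin n)) e2)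
      (a := a) (b' := b) ?_ ?_ ?_ (hab e0 (by simp)) (hab e1 (by simp)) (hab e2 (by simp))
    · exact fun h => hnd.1.1 ((Fintype.equivFin _).injective h)
    · exact fun h => hnd.1.2.1 ((Fintype.equivFin _).injective h)
    · exact fun h => hnd.2.1.1 ((Fintype.equivFin _).injective h)
  · rintro u p hp hl ⟨a, b, hab⟩
    have hnd : p.edges.Nodup := hp.isCircuit.isTrail.edges_nodup
    have hlen : p.edges.length = 4 := by rw [SimpleGraph.Walk.length_edges, hl]
    obtain ⟨e0, e1, e2, t, hE⟩ := list_four p.edges hlen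
    rw [hE] at hnd hab
    simp only [List.nodup_cons, List.mem_cons, not_or] at hnd
    refine three_distinct (x := Fintype.equivFin (Sym2 (Fin n)) e0)
      (y := Fintype.equivFin (Sym2 (Fin n)) e1) (z := Fintype.equivFin (Sym2 (Fin n)) e2)
      (a := a) (b' := b) ?_ ?_ ?_ (hab e0 (by simp)) (hab e1 (by simp)) (hab e2 (by simp))
    · exact fun h => hnd.1.1 ((Fintype.equivFin _).injective h)
    · exact fun h => hnd.1.2.1 ((Fintype.equivFin _).injective h)
    · exact fun h => hnd.2.1.1 ((Fintype.equivFin _).injective h)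


/-- if K_n has a star edge-coloring with b colors then
b ≥ 2n(n−1)/(n+2); in particular χ'_s(K_n) ≥ (2 + o(1))·n. -/
theorem starChromaticIndex_completeGraph_lower_bound :
    (∀ (n b : ℕ) (c : Sym2 (Fin n) → Fin b),
        IsStarEdgeColoring (⊤ : SimpleGraph (Fin n)) c →
        (2 * (n : ℚ) * ((n : ℚ) - 1)) / ((n : ℚ) + 2) ≤ (b : ℚ)) ∧
    (∀ ε : ℝ, 0 < ε → ∃ N : ℕ, ∀ n : ℕ, N ≤ n →
        (2 - ε) * (n : ℝ) ≤ (starChromaticIndex (⊤ : SimpleGraph (Fin n)) : ℝ)) := by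
  constructor
  · intro n b c hc
    exact part1 c hc
  · intro ε hε
    rcases le_or_gt 2 ε with h2 | h2
    · exact ⟨0, fun n _ => le_trans
        (mul_nonpos_of_nonpos_of_nonneg (by linarith) (Nat.cast_nonneg n))
        (Nat.cast_nonneg _)⟩
    · refine ⟨⌈(6:ℝ)/ε⌉₊, fun n hn => ?_⟩
      have hne : {k | ∃ c : Sym2 (Fin n) → Fin k,
          IsStarEdgeColoring (⊤ : SimpleGraph (Fin n)) c}.Nonempty := exists_coloring n
      have hmem : ∃ c : Sym2 (Fin n) → Fin (starChromaticIndex (⊤ : SimpleGraph (Fin n))),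
          IsStarEdgeColoring (⊤ : SimpleGraph (Fin n)) c := Nat.sInf_mem hne
      obtain ⟨c, hc⟩ := hmem
      have hq := part1 c hc
      have hr : (2 * (n:ℝ) * ((n:ℝ) - 1)) / ((n:ℝ) + 2)
          ≤ ((starChromaticIndex (⊤ : SimpleGraph (Fin n)) : ℕ) : ℝ) := by
        have h' := (Rat.cast_le (K := ℝ)).mpr hq
        push_cast at h'
        exact h'
      have hn6 : (6:ℝ)/ε ≤ (n:ℝ) := le_trans (Nat.le_ceil _) (Nat.cast_le.mpr hn)
      have hεn : (6:ℝ) ≤ ε * n := by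
        rw [div_le_iff₀ hε] at hn6; linarith
      have hgoal : (2 - ε) * (n:ℝ) ≤ (2 * (n:ℝ) * ((n:ℝ) - 1)) / ((n:ℝ) + 2) := by
        rw [le_div_iff₀ (by positivity : (0:ℝ) < (n:ℝ) + 2)]
        nlinarith [mul_nonneg (Nat.cast_nonneg n : (0:ℝ) ≤ n) (by linarith : (0:ℝ) ≤ ε * n - 6),
          mul_nonneg hε.le (Nat.cast_nonneg n : (0:ℝ) ≤ n)]
      exact hgoal.trans hr
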